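/- Nonpositivity of the boundary remainder with cross feedback: let Δx > 0 and set x_0 = 0, x_1 = Δx, x_M = 1, x_{M+1} = 1 + Δx. Let 0 < D^min_1 ≤ D^max_1 and 0 < D^min_2 ≤ D^max_2, let κ_1, κ_2 > 0 satisfy κ_2 < √(D^min_2/D^max_1) and κ_1 < √(D^min_1/D^max_2), and let μ satisfy 0 < μ ≤ (1/(2 + Δx))·ln(D^min_1/(D^max_2·κ_1²)). Then for all real numbers a and b, a²·(D^max_1·κ_2²·e^{−μ·x_1} − D^min_2·e^{μ·x_0}) + b²·(D^max_2·κ_1²·e^{μ·x_M} − D^min_1·e^{−μ·x_{M+1}}) ≤ 0. -/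
import Mathlib

/-- Nonpositivity of the boundary remainder with cross feedback, with
`x_0 = 0`, `x_1 = Δx`, `x_M = 1`, `x_{M+1} = 1 + Δx`. -/
theorem boundary_remainder_nonpositive_cross_feedback
    (Δx Dmin1 Dmax1 Dmin2 Dmax2 κ1 κ2 μ : ℝ)
    (hΔx : 0 < Δx)
    (h1 : 0 < Dmin1) (h1' : Dmin1 ≤ Dmax1)
    (h2 : 0 < Dmin2) (h2' : Dmin2 ≤ Dmax2)
    (hκ1 : 0 < κ1) (hκ2 : 0 < κ2)
    (hκ2b : κ2 < Real.sqrt (Dmin2 / Dmax1))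
    (hκ1b : κ1 < Real.sqrt (Dmin1 / Dmax2))
    (hμ : 0 < μ) (hμb : μ ≤ 1 / (2 + Δx) * Real.log (Dmin1 / (Dmax2 * κ1 ^ 2)))
    (a b : ℝ) :
    a ^ 2 * (Dmax1 * κ2 ^ 2 * Real.exp (-μ * Δx) - Dmin2 * Real.exp (μ * 0)) +
      b ^ 2 * (Dmax2 * κ1 ^ 2 * Real.exp (μ * 1) - Dmin1 * Real.exp (-μ * (1 + Δx))) ≤ 0 := by
  have hDmax1 : 0 < Dmax1 := lt_of_lt_of_le h1 h1'
  have hDmax2 : 0 < Dmax2 := lt_of_lt_of_le h2 h2'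
  -- term 1
  have hκ2sq : κ2 ^ 2 < Dmin2 / Dmax1 := (Real.lt_sqrt hκ2.le).mp hκ2b
  have ht1 : Dmax1 * κ2 ^ 2 * Real.exp (-μ * Δx) - Dmin2 * Real.exp (μ * 0) ≤ 0 := by
    have he : Real.exp (-μ * Δx) ≤ 1 := by
      rw [Real.exp_le_one_iff]
      nlinarith
    have : Dmax1 * κ2 ^ 2 < Dmin2 := by
      rw [lt_div_iff₀ hDmax1] at hκ2sq; linarith
    simp only [mul_zero, Real.exp_zero, mul_one]
    nlinarith [Real.exp_pos (-μ * Δx)]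
  -- term 2
  have hpos : 0 < Dmax2 * κ1 ^ 2 := by positivity
  have hq : 0 < Dmin1 / (Dmax2 * κ1 ^ 2) := by positivity
  have hμ2 : μ * (2 + Δx) ≤ Real.log (Dmin1 / (Dmax2 * κ1 ^ 2)) := by
    have h2Δx : 0 < 2 + Δx := by linarith
    rw [div_mul_eq_mul_div, le_div_iff₀ h2Δx] at hμb
    linarith
  have hexp : Real.exp (μ * (2 + Δx)) ≤ Dmin1 / (Dmax2 * κ1 ^ 2) := by
    calc Real.exp (μ * (2 + Δx)) ≤ Real.exp (Real.log (Dmin1 / (Dmax2 * κ1 ^ 2))) :=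
          Real.exp_le_exp.mpr hμ2
      _ = _ := Real.exp_log hq
  have ht2 : Dmax2 * κ1 ^ 2 * Real.exp (μ * 1) - Dmin1 * Real.exp (-μ * (1 + Δx)) ≤ 0 := by
    rw [le_div_iff₀ hpos] at hexp
    have key : Real.exp (μ * 1) = Real.exp (μ * (2 + Δx)) * Real.exp (-μ * (1 + Δx)) := by
      rw [← Real.exp_add]; ring_nf
    rw [key]
    nlinarith [Real.exp_pos (-μ * (1 + Δx))]
  nlinarith [sq_nonneg a, sq_nonneg b]
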